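/- arXiv:0812.3257 — 2 statements merged into one kernel-verified Lean document; each statement's English description precedes it below -/
import Mathlib

section
/- Let g be a Lie algebra over a field K of characteristic zero and let n ∈ ℕ. The symmetrization map sym : S_n(g) → U(g), defined by sym(x₁⋯xₙ) = (1/n!) Σ_{σ∈Sₙ} x_{σ(1)}⋯x_{σ(n)}, is an isomorphism of g-modules onto its image (a g-submodule of U(g)), where g acts on both sides by the derivation extension of the adjoint action. -/
attribute [local instance] LieRing.ofAssociativeRing

open UniversalEnvelopingAlgebra
set_option linter.unusedSectionVars false

namespace SymAux

variable (K : Type*) [Field K] [CharZero K] (g : Type*) [LieRing g] [LieAlgebra K g]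

/-- product of `ι`'s of a list -/
def prodι (l : List g) : UniversalEnvelopingAlgebra K g := (l.map (ι K)).prod

/-- monomial on a tuple -/
def P {m : ℕ} (v : Fin m → g) : UniversalEnvelopingAlgebra K g :=
  (List.ofFn fun i => ι K (v i)).prod

variable {K g}

lemma P_eq_prodι {m : ℕ} (v : Fin m → g) : P K g v = prodι K g (List.ofFn v) := by
  simp [P, prodι, List.map_ofFn]; rfl

lemma prodι_nil : prodι K g [] = 1 := rfl

lemma prodι_cons (x : g) (l : List g) : prodι K g (x :: l) = ι K x * prodι K g l := by
  simp [prodι]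

def GG : Submodule K (UniversalEnvelopingAlgebra K g) :=
  Submodule.span K (Set.range (UniversalEnvelopingAlgebra.ι K : g →ₗ⁅K⁆ _))

def Mon (m : ℕ) : Set (UniversalEnvelopingAlgebra K g) :=
  {u | ∃ l : List g, l.length = m ∧ prodι K g l = u}

lemma GG_pow_eq (m : ℕ) :
    (GG : Submodule K (UniversalEnvelopingAlgebra K g)) ^ m
      = Submodule.span K (Mon (K := K) (g := g) m) := by
  induction m with
  | zero =>
    rw [pow_zero, Submodule.one_eq_span]
    congr 1
    ext u
    constructor
    · rintro rfl; exact ⟨[], rfl, rfl⟩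
    · rintro ⟨l, hl, rfl⟩
      rw [List.length_eq_zero_iff] at hl
      subst hl; rfl
  | succ m ih =>
    rw [pow_succ', ih]
    apply le_antisymm
    · rw [Submodule.mul_le]
      intro a ha b hb
      induction ha using Submodule.span_induction with
      | mem a ha =>
        obtain ⟨x, rfl⟩ := ha
        induction hb using Submodule.span_induction with
        | mem b hb =>
          obtain ⟨l, hl, rfl⟩ := hb
          apply Submodule.subset_span
          exact ⟨x :: l, by simp [hl], (prodι_cons x l).symm⟩
        | zero => simp
        | add b c _ _ hb hc => rw [mul_add]; exact add_mem hb hc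
        | smul c b _ hb => rw [mul_smul_comm]; exact Submodule.smul_mem _ _ hb
      | zero => simp
      | add a c _ _ ha hc => rw [add_mul]; exact add_mem ha hc
      | smul c a _ ha => rw [smul_mul_assoc]; exact Submodule.smul_mem _ _ ha
    · rw [Submodule.span_le]
      rintro u ⟨l, hl, rfl⟩
      match l, hl with
      | x :: l, hl =>
        rw [prodι_cons]
        exact Submodule.mul_mem_mul (Submodule.subset_span ⟨x, rfl⟩)
          (Submodule.subset_span ⟨l, by simpa using hl, rfl⟩)

def FF (m : ℕ) : Submodule K (UniversalEnvelopingAlgebra K g) :=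
  ⨆ k ∈ Finset.range (m + 1), (GG : Submodule K (UniversalEnvelopingAlgebra K g)) ^ k

lemma prodι_mem_FF {l : List g} {m : ℕ} (h : l.length ≤ m) :
    prodι K g l ∈ (FF m : Submodule K (UniversalEnvelopingAlgebra K g)) := by
  have h1 : prodι K g l ∈ (GG : Submodule K (UniversalEnvelopingAlgebra K g)) ^ l.length := by
    rw [GG_pow_eq]; exact Submodule.subset_span ⟨l, rfl, rfl⟩
  exact Submodule.mem_iSup_of_mem l.length
    (Submodule.mem_iSup_of_mem (Finset.mem_range.2 (Nat.lt_succ_of_le h)) h1)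

lemma FF_le_span (m : ℕ) :
    (FF m : Submodule K (UniversalEnvelopingAlgebra K g)) ≤
      Submodule.span K (⋃ k ∈ Finset.range (m+1), Mon (K := K) (g := g) k) := by
  apply iSup₂_le
  intro k hk
  rw [GG_pow_eq, Submodule.span_le]
  intro u hu
  exact Submodule.subset_span (Set.mem_biUnion hk hu)

/-- induction principle for FF membership -/
lemma FF_induction {m : ℕ} {p : UniversalEnvelopingAlgebra K g → Prop}
    (h0 : p 0)
    (hmon : ∀ l : List g, l.length ≤ m → p (prodι K g l))
    (hadd : ∀ a b, p a → p b → p (a + b))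
    (hsmul : ∀ (c : K) a, p a → p (c • a))
    (u : UniversalEnvelopingAlgebra K g) (hu : u ∈ (FF m : Submodule K _)) : p u := by
  have h := FF_le_span m hu
  clear hu
  induction h using Submodule.span_induction with
  | mem a ha =>
    rw [Set.mem_iUnion₂] at ha
    obtain ⟨k, hk, l, hl, rfl⟩ := ha
    exact hmon l (hl ▸ Nat.lt_succ_iff.1 (Finset.mem_range.1 hk))
  | zero => exact h0
  | add a b _ _ ha hb => exact hadd a b ha hb
  | smul c a _ ha => exact hsmul c a ha

lemma mul_ι_mem_FF {m : ℕ} (x : g) {u : UniversalEnvelopingAlgebra K g}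
    (hu : u ∈ (FF m : Submodule K _)) : ι K x * u ∈ (FF (m+1) : Submodule K _) := by
  refine FF_induction (p := fun u => ι K x * u ∈ (FF (m+1) : Submodule K _)) ?_ ?_ ?_ ?_ u hu
  · simp
  · intro l hl; rw [← prodι_cons]; exact prodι_mem_FF (by simpa using hl)
  · intro a b ha hb; rw [mul_add]; exact add_mem ha hb
  · intro c a ha; rw [mul_smul_comm]; exact Submodule.smul_mem _ _ ha

/-- derivation formula on list monomials -/
lemma lie_prodι (x : g) (l : List g) :
    ι K x * prodι K g l - prodι K g l * ι K x
      = ∑ j : Fin l.length, prodι K g (l.set j ⁅x, l.get j⁆) := by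
  induction l with
  | nil => simp [prodι_nil]
  | cons y l ih =>
    have key : ι K x * prodι K g (y :: l) - prodι K g (y :: l) * ι K x
        = (ι K x * ι K y - ι K y * ι K x) * prodι K g l
          + ι K y * (ι K x * prodι K g l - prodι K g l * ι K x) := by
      rw [prodι_cons]; noncomm_ring
    have hxy : ι K x * ι K y - ι K y * ι K x = ι K ⁅x, y⁆ := by
      have := (ι K : g →ₗ⁅K⁆ UniversalEnvelopingAlgebra K g).map_lie x y
      rw [this]; rfl
    rw [key, ih, hxy]
    have hsum : ∑ j : Fin (y :: l).length, prodι K g ((y :: l).set j ⁅x, (y :: l).get j⁆)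
        = prodι K g (⁅x, y⁆ :: l)
          + ∑ j : Fin l.length, prodι K g (y :: l.set j ⁅x, l.get j⁆) := by
      show ∑ j : Fin (l.length + 1), _ = _
      rw [Fin.sum_univ_succ]
      rfl
    rw [hsum]
    simp only [prodι_cons, Finset.mul_sum]

lemma lie_mem_FF {m : ℕ} (x : g) {u : UniversalEnvelopingAlgebra K g}
    (hu : u ∈ (FF m : Submodule K _)) :
    ι K x * u - u * ι K x ∈ (FF m : Submodule K _) := by
  refine FF_induction (p := fun u => ι K x * u - u * ι K x ∈ (FF m : Submodule K _))
    ?_ ?_ ?_ ?_ u hu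
  · simp
  · intro l hl
    rw [lie_prodι]
    exact Submodule.sum_mem _ fun j _ => prodι_mem_FF (by simpa using hl)
  · intro a b ha hb
    have h : ι K x * (a + b) - (a + b) * ι K x
        = (ι K x * a - a * ι K x) + (ι K x * b - b * ι K x) := by noncomm_ring
    rw [h]; exact add_mem ha hb
  · intro c a ha
    have h : ι K x * (c • a) - (c • a) * ι K x = c • (ι K x * a - a * ι K x) := by
      rw [mul_smul_comm, smul_mul_assoc, smul_sub]
    rw [h]; exact Submodule.smul_mem _ _ ha

/-- permutation difference lemma -/
lemma perm_diff_mem {l₁ l₂ : List g} (hp : l₁.Perm l₂) :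
    ∀ m : ℕ, l₁.length ≤ m + 1 →
      prodι K g l₁ - prodι K g l₂ ∈ (FF m : Submodule K (UniversalEnvelopingAlgebra K g)) := by
  induction hp with
  | nil => intro m _; simp
  | @cons x l₁ l₂ hp ih =>
    intro m hm
    rcases m with _ | m
    · have h1 : l₁ = [] := by
        simpa using List.length_eq_zero_iff.1 (by simpa using hm)
      have h2 : l₂ = [] := by
        rw [h1] at hp; exact hp.symm.eq_nil
      rw [h1, h2, sub_self]
      exact zero_mem _
    · rw [prodι_cons, prodι_cons, ← mul_sub]
      exact mul_ι_mem_FF x (ih m (by simpa using hm))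
  | swap x y l =>
    intro m hm
    have hxy : prodι K g (y :: x :: l) - prodι K g (x :: y :: l)
        = prodι K g (⁅y, x⁆ :: l) := by
      rw [prodι_cons, prodι_cons, prodι_cons, prodι_cons, prodι_cons]
      have h : ι K y * ι K x - ι K x * ι K y = ι K ⁅y, x⁆ := by
        have := (ι K : g →ₗ⁅K⁆ UniversalEnvelopingAlgebra K g).map_lie y x
        rw [this]; rfl
      rw [← h]; noncomm_ring
    rw [hxy]
    apply prodι_mem_FF
    simp at hm ⊢
    omega
  | @trans l₁ l₂ l₃ hp₁ hp₂ ih₁ ih₂ =>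
    intro m hm
    have key : prodι K g l₁ - prodι K g l₃
        = (prodι K g l₁ - prodι K g l₂) + (prodι K g l₂ - prodι K g l₃) := by
      noncomm_ring
    rw [key]
    exact add_mem (ih₁ m hm) (ih₂ m (by rwa [← hp₁.length_eq]))

end SymAux

namespace SymAux

open PiTensorProduct
open scoped TensorProduct
set_option linter.unusedSectionVars false
section Coproduct2

variable {K : Type*} [Field K] [CharZero K] {g : Type*} [LieRing g] [LieAlgebra K g] {n : ℕ}

/-- n-fold tensor power of U -/
noncomputable abbrev TT (K : Type*) [Field K] (g : Type*) [LieRing g] [LieAlgebra K g] (n : ℕ) :=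
  ⨂[K] (_ : Fin n), UniversalEnvelopingAlgebra K g

/-- single-slot element -/
noncomputable def slot (i : Fin n) (u : UniversalEnvelopingAlgebra K g) : TT K g n :=
  tprod K (Function.update (fun _ => 1) i u)

lemma slot_def (i : Fin n) (u : UniversalEnvelopingAlgebra K g) :
    slot i u = PiTensorProduct.tprod K (Function.update (fun _ => 1) i u) := rfl

lemma slot_mul_tprod (i : Fin n) (u : UniversalEnvelopingAlgebra K g)
    (w : Fin n → UniversalEnvelopingAlgebra K g) :
    slot i u * tprod K w = tprod K (Function.update w i (u * w i)) := by
  rw [slot_def, tprod_mul_tprod]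
  congr 1
  funext k
  by_cases h : k = i
  · subst h; simp
  · simp [Function.update_apply, h]

lemma slot_mul_slot_same (i : Fin n) (u v : UniversalEnvelopingAlgebra K g) :
    slot i u * slot i v = slot i (u * v) := by
  rw [slot_def, slot_def, slot_def, tprod_mul_tprod]
  congr 1
  funext k
  by_cases h : k = i
  · subst h; simp
  · simp [Function.update_apply, h]

lemma slot_mul_slot_comm {i j : Fin n} (h : i ≠ j) (u v : UniversalEnvelopingAlgebra K g) :
    slot i u * slot j v = slot j v * slot i u := by
  rw [slot_def, slot_def, tprod_mul_tprod, tprod_mul_tprod]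
  congr 1
  funext k
  by_cases hi : k = i
  · subst hi; simp [Function.update_apply, h, Ne.symm h]
  · by_cases hj : k = j
    · subst hj; simp [Function.update_apply, h, Ne.symm h]
    · simp [Function.update_apply, hi, hj]

/-- slot as a linear map -/
noncomputable def slotL (i : Fin n) : UniversalEnvelopingAlgebra K g →ₗ[K] TT K g n where
  toFun u := slot i u
  map_add' u v := MultilinearMap.map_update_add _ _ _ _ _
  map_smul' c u := MultilinearMap.map_update_smul _ _ _ _ _

lemma sum_lie' {L : Type*} [LieRing L] {α : Type*} (s : Finset α) (f : α → L) (y : L) :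
    ⁅∑ i ∈ s, f i, y⁆ = ∑ i ∈ s, ⁅f i, y⁆ := by
  induction s using Finset.cons_induction with
  | empty => simp
  | cons a s ha ih => rw [Finset.sum_cons, Finset.sum_cons, add_lie, ih]

lemma lie_sum' {L : Type*} [LieRing L] {α : Type*} (s : Finset α) (x : L) (f : α → L) :
    ⁅x, ∑ i ∈ s, f i⁆ = ∑ i ∈ s, ⁅x, f i⁆ := by
  induction s using Finset.cons_induction with
  | empty => simp
  | cons a s ha ih => rw [Finset.sum_cons, Finset.sum_cons, lie_add, ih]

/-- the Lie algebra map `g → T`, `x ↦ ∑ᵢ 1 ⊗ ⋯ ⊗ ι x ⊗ ⋯ ⊗ 1` -/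
noncomputable def δ : g →ₗ⁅K⁆ TT K g n where
  toLinearMap := ∑ i : Fin n, (slotL i).comp (UniversalEnvelopingAlgebra.ι K : g →ₗ⁅K⁆ _).toLinearMap
  map_lie' := by
    intro x y
    simp only [AddHom.toFun_eq_coe, LinearMap.coe_toAddHom, LinearMap.sum_apply,
      LinearMap.coe_comp, Function.comp_apply, LieHom.coe_toLinearMap]
    symm
    rw [sum_lie']
    refine Finset.sum_congr rfl ?_
    intro i _
    rw [lie_sum', Finset.sum_eq_single i]
    · rw [Ring.lie_def]
      show slot i _ * slot i _ - slot i _ * slot i _ = _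
      rw [slot_mul_slot_same, slot_mul_slot_same]
      have h1 : (UniversalEnvelopingAlgebra.ι K) ⁅x, y⁆
          = UniversalEnvelopingAlgebra.ι K x * UniversalEnvelopingAlgebra.ι K y
            - UniversalEnvelopingAlgebra.ι K y * UniversalEnvelopingAlgebra.ι K x := by
        have := (UniversalEnvelopingAlgebra.ι K :
          g →ₗ⁅K⁆ UniversalEnvelopingAlgebra K g).map_lie x y
        rw [this]; rfl
      rw [h1, map_sub]
      rfl
    · intro j _ hji
      rw [Ring.lie_def]
      show slot i _ * slot j _ - slot j _ * slot i _ = 0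
      rw [slot_mul_slot_comm (Ne.symm hji), sub_self]
    · intro h; exact absurd (Finset.mem_univ i) h

end Coproduct2
end SymAux


namespace SymAux

open PiTensorProduct
open scoped TensorProduct
set_option linter.unusedSectionVars false
section Coproduct3

variable {K : Type*} [Field K] [CharZero K] {g : Type*} [LieRing g] [LieAlgebra K g] {n : ℕ}

variable (K g n)

/-- comultiplication-like algebra map -/
noncomputable def Δ : UniversalEnvelopingAlgebra K g →ₐ[K] TT K g n :=
  UniversalEnvelopingAlgebra.lift K (δ : g →ₗ⁅K⁆ TT K g n)

/-- counit -/
noncomputable def ε : UniversalEnvelopingAlgebra K g →ₐ[K] K :=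
  UniversalEnvelopingAlgebra.lift K (0 : g →ₗ⁅K⁆ K)

/-- projection onto the augmentation ideal along constants -/
noncomputable def π : UniversalEnvelopingAlgebra K g →ₗ[K] UniversalEnvelopingAlgebra K g :=
  LinearMap.id - (Algebra.linearMap K (UniversalEnvelopingAlgebra K g)).comp (ε K g).toLinearMap

variable {K g n}

lemma π_one : π K g (1 : UniversalEnvelopingAlgebra K g) = 0 := by
  simp [π]

lemma π_ι (x : g) : π K g (UniversalEnvelopingAlgebra.ι K x) = UniversalEnvelopingAlgebra.ι K x := by
  have h : (ε K g) (UniversalEnvelopingAlgebra.ι K x) = 0 := by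
    rw [ε, UniversalEnvelopingAlgebra.lift_ι_apply]
    rfl
  simp only [π, LinearMap.sub_apply, LinearMap.id_apply, LinearMap.coe_comp,
    Function.comp_apply, AlgHom.toLinearMap_apply, Algebra.linearMap_apply, h, map_zero,
    sub_zero]

variable (K g n)

/-- tensor power of π -/
noncomputable def πT : TT K g n →ₗ[K] TT K g n :=
  PiTensorProduct.map (fun _ => π K g)

/-- symmetrization-detecting map -/
noncomputable def Ψ : UniversalEnvelopingAlgebra K g →ₗ[K] TT K g n :=
  (πT K g n).comp (Δ K g n).toLinearMap

/-- multiplication map -/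
noncomputable def μ : TT K g n →ₗ[K] UniversalEnvelopingAlgebra K g :=
  PiTensorProduct.lift (MultilinearMap.mkPiAlgebraFin K n (UniversalEnvelopingAlgebra K g))

variable {K g n}

lemma μ_tprod (w : Fin n → UniversalEnvelopingAlgebra K g) :
    μ K g n (tprod K w) = (List.ofFn w).prod := by
  rw [μ, PiTensorProduct.lift.tprod, MultilinearMap.mkPiAlgebraFin_apply]

lemma Δ_ι (x : g) : Δ K g n (UniversalEnvelopingAlgebra.ι K x)
    = ∑ i : Fin n, slot i (UniversalEnvelopingAlgebra.ι K x) := by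
  rw [Δ, UniversalEnvelopingAlgebra.lift_ι_apply]
  show (∑ i : Fin n, (slotL i).comp _) x = _
  simp only [LinearMap.sum_apply, LinearMap.coe_comp, Function.comp_apply,
    LieHom.coe_toLinearMap]
  rfl

/-- ordered product of slot elements attached to a list of (position, generator) pairs -/
noncomputable def Lprod (L : List (Fin n × g)) : TT K g n :=
  (L.map (fun p => slot p.1 (UniversalEnvelopingAlgebra.ι K p.2))).prod

lemma Lprod_nil : (Lprod [] : TT K g n) = 1 := rfl

lemma Lprod_cons (p : Fin n × g) (L : List (Fin n × g)) :
    (Lprod (p :: L) : TT K g n) = slot p.1 (UniversalEnvelopingAlgebra.ι K p.2) * Lprod L := by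
  simp [Lprod]

/-- the slots of `Lprod` -/
lemma Lprod_eq_tprod (L : List (Fin n × g)) :
    (Lprod L : TT K g n) = tprod K (fun k =>
      prodι K g ((L.filter (fun p => p.1 = k)).map Prod.snd)) := by
  induction L with
  | nil =>
    rw [Lprod_nil]
    show _ = PiTensorProduct.tprod K _
    rw [PiTensorProduct.one_def]
    congr 1
  | cons p L ih =>
    rw [Lprod_cons, ih, slot_mul_tprod]
    congr 1
    funext k
    by_cases h : p.1 = k
    · subst h
      rw [Function.update_self]
      rw [List.filter_cons_of_pos (by simp), List.map_cons, prodι_cons]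
    · rw [Function.update_of_ne (Ne.symm h)]
      rw [List.filter_cons_of_neg (by simpa using h)]

/-- total length of the slot lists -/
lemma sum_filter_length (L : List (Fin n × g)) :
    ∑ k : Fin n, (L.filter (fun p => p.1 = k)).length = L.length := by
  induction L with
  | nil => simp
  | cons p L ih =>
    have h : ∀ k : Fin n, ((p :: L).filter (fun q => q.1 = k)).length
        = (if p.1 = k then 1 else 0) + (L.filter (fun q => q.1 = k)).length := by
      intro k
      by_cases h : p.1 = k
      · rw [List.filter_cons_of_pos (by simpa using h), if_pos h, List.length_cons]; ring
      · rw [List.filter_cons_of_neg (by simpa using h), if_neg h, zero_add]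
    simp only [h]
    rw [Finset.sum_add_distrib, ih, Finset.sum_ite_eq]
    simp
    omega
end Coproduct3
end SymAux

namespace SymAux

open PiTensorProduct
open scoped TensorProduct
set_option linter.unusedSectionVars false
section Coproduct4

variable {K : Type*} [Field K] [CharZero K] {g : Type*} [LieRing g] [LieAlgebra K g] {n : ℕ}

lemma prodι_singleton (x : g) : prodι K g [x] = UniversalEnvelopingAlgebra.ι K x := by
  rw [prodι]; simp

/-- tensor with an empty slot is killed -/
lemma πT_Lprod_eq_zero {L : List (Fin n × g)} (hL : L.length < n) :
    πT K g n (Lprod L) = 0 := by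
  rw [Lprod_eq_tprod, πT, PiTensorProduct.map_tprod]
  by_cases hall : ∀ k : Fin n, (L.filter (fun p => p.1 = k)) ≠ []
  · exfalso
    have h1 : ∀ k : Fin n, 1 ≤ (L.filter (fun p => p.1 = k)).length := by
      intro k
      have := hall k
      cases h : (L.filter (fun p => p.1 = k)) with
      | nil => exact absurd h (hall k)
      | cons a l => simp [h]
    have h2 : (n : ℕ) ≤ ∑ k : Fin n, (L.filter (fun p => p.1 = k)).length := by
      calc (n : ℕ) = ∑ _k : Fin n, 1 := by simp
      _ ≤ _ := Finset.sum_le_sum (fun k _ => h1 k)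
    rw [sum_filter_length] at h2
    omega
  · push_neg at hall
    obtain ⟨k, hk⟩ := hall
    apply MultilinearMap.map_coord_zero _ k
    rw [hk]
    show π K g (prodι K g []) = 0
    rw [prodι_nil, π_one]

/-- Δ of a monomial is a combination of Lprods -/
lemma Δ_prodι_mem_span (l : List g) :
    Δ K g n (prodι K g l) ∈ Submodule.span K
      {t : TT K g n | ∃ L : List (Fin n × g), L.map Prod.snd = l ∧ Lprod L = t} := by
  induction l with
  | nil =>
    rw [prodι_nil, _root_.map_one]
    exact Submodule.subset_span ⟨[], rfl, rfl⟩
  | cons x l ih =>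
    rw [prodι_cons, _root_.map_mul, Δ_ι]
    have key : ∀ t ∈ Submodule.span K
        {t : TT K g n | ∃ L : List (Fin n × g), L.map Prod.snd = l ∧ Lprod L = t},
        (∑ i : Fin n, slot i (UniversalEnvelopingAlgebra.ι K x)) * t ∈ Submodule.span K
          {t : TT K g n | ∃ L : List (Fin n × g), L.map Prod.snd = x :: l ∧ Lprod L = t} := by
      intro t ht
      induction ht using Submodule.span_induction with
      | mem t ht =>
        obtain ⟨L, hL, rfl⟩ := ht
        rw [Finset.sum_mul]
        apply Submodule.sum_mem
        intro i _
        refine Submodule.subset_span ⟨(i, x) :: L, by simp [hL], ?_⟩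
        rw [Lprod_cons]
      | zero => rw [mul_zero]; exact zero_mem _
      | add a b _ _ ha hb => rw [mul_add]; exact add_mem ha hb
      | smul c a _ ha => rw [mul_smul_comm]; exact Submodule.smul_mem _ _ ha
    exact key _ ih

/-- Ψ kills low filtration levels -/
lemma Ψ_eq_zero_of_mem_FF {m : ℕ} (hmn : m < n) {u : UniversalEnvelopingAlgebra K g}
    (hu : u ∈ (FF m : Submodule K _)) : Ψ K g n u = 0 := by
  refine FF_induction (K := K) (g := g) (m := m) (p := fun u => Ψ K g n u = 0) ?_ ?_ ?_ ?_ u hu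
  · simp
  · intro l hl
    show πT K g n (Δ K g n (prodι K g l)) = 0
    have hkill : ∀ t ∈ Submodule.span K
        {t : TT K g n | ∃ L : List (Fin n × g), L.map Prod.snd = l ∧ Lprod L = t},
        πT K g n t = 0 := by
      intro t ht
      induction ht using Submodule.span_induction with
      | mem t ht =>
        obtain ⟨L, hL, rfl⟩ := ht
        apply πT_Lprod_eq_zero
        have : L.length = l.length := by rw [← hL, List.length_map]
        omega
      | zero => simp
      | add a b _ _ ha hb => rw [map_add, ha, hb, add_zero]
      | smul c a _ ha => rw [map_smul, ha, smul_zero]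
    exact hkill _ (Δ_prodι_mem_span (K := K) (g := g) (n := n) l)
  · intro a b ha hb; rw [map_add, ha, hb, add_zero]
  · intro c a ha; rw [map_smul, ha, smul_zero]

/-- expansion of a product of sums in a (noncommutative) ring -/
lemma prod_ofFn_sum {R : Type*} [Semiring R] {N : ℕ} :
    ∀ {m : ℕ} (c : Fin m → Fin N → R),
      (List.ofFn (fun j => ∑ i : Fin N, c j i)).prod
        = ∑ f : Fin m → Fin N, (List.ofFn (fun j => c j (f j))).prod
  | 0, c => by simp
  | (m+1), c => by
    rw [List.ofFn_succ, List.prod_cons]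
    have ih := prod_ofFn_sum (fun (j : Fin m) i => c j.succ i)
    rw [show (List.ofFn fun j : Fin m => (fun j => ∑ i : Fin N, c j i) j.succ)
        = List.ofFn (fun j : Fin m => ∑ i : Fin N, c j.succ i) from rfl, ih,
      Finset.sum_mul_sum]
    rw [← Equiv.sum_comp (Fin.consEquiv (fun _ : Fin (m+1) => Fin N))
      (fun f => (List.ofFn (fun j => c j (f j))).prod), Fintype.sum_prod_type]
    apply Finset.sum_congr rfl
    intro i _
    apply Finset.sum_congr rfl
    intro f' _
    rw [List.ofFn_succ, List.prod_cons]
    simp [Fin.consEquiv, Fin.cons_zero, Fin.cons_succ]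

/-- full expansion of Δ on a length-n monomial -/
lemma Δ_P (w : Fin n → g) :
    Δ K g n (P K g w) = ∑ f : Fin n → Fin n, Lprod (List.ofFn (fun j => (f j, w j))) := by
  have h1 : Δ K g n (P K g w)
      = (List.ofFn (fun j => ∑ i : Fin n, slot i (UniversalEnvelopingAlgebra.ι K (w j)))).prod := by
    rw [P, map_list_prod, List.map_ofFn]
    exact congrArg List.prod (congrArg List.ofFn (funext fun j => Δ_ι (w j)))
  rw [h1, prod_ofFn_sum]
  apply Finset.sum_congr rfl
  intro f _
  rw [Lprod, List.map_ofFn]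
  rfl

lemma filter_eq_singleton {α : Type*} (p : α → Bool) :
    ∀ (l : List α) (a : α), l.Nodup → a ∈ l → p a = true →
      (∀ b ∈ l, p b = true → b = a) → l.filter p = [a]
  | [], a => by intro _ h; exact absurd h List.not_mem_nil
  | c :: l, a => by
    intro hnd hmem hpa huniq
    by_cases hca : c = a
    · subst hca
      rw [List.filter_cons_of_pos hpa]
      have : l.filter p = [] := by
        rw [List.filter_eq_nil_iff]
        intro b hb hpb
        have : b = c := huniq b (List.mem_cons_of_mem _ hb) hpb
        subst this
        exact (List.nodup_cons.1 hnd).1 hb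
      rw [this]
    · have hpc : ¬ (p c = true) := fun hpc => hca (huniq c List.mem_cons_self hpc)
      rw [List.filter_cons_of_neg (by simpa using hpc)]
      refine filter_eq_singleton p l a (List.nodup_cons.1 hnd).2 ?_ hpa
        (fun b hb hpb => huniq b (List.mem_cons_of_mem _ hb) hpb)
      rcases List.mem_cons.1 hmem with h | h
      · exact absurd h.symm hca
      · exact h

/-- value of πT ∘ Lprod on a permutation-indexed monomial -/
lemma πT_Lprod_perm (σ : Equiv.Perm (Fin n)) (w : Fin n → g) :
    πT K g n (Lprod (List.ofFn (fun j => (σ j, w j))))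
      = tprod K (fun k => UniversalEnvelopingAlgebra.ι K (w (σ.symm k))) := by
  rw [Lprod_eq_tprod, πT, PiTensorProduct.map_tprod]
  congr 1
  funext k
  have hfil : (List.ofFn (fun j => (σ j, w j))).filter (fun p => p.1 = k)
      = [(k, w (σ.symm k))] := by
    apply filter_eq_singleton
    · exact List.nodup_ofFn.2 (fun a b hab => σ.injective (congrArg Prod.fst hab))
    · rw [List.mem_ofFn]
      refine ⟨σ.symm k, ?_⟩
      show (σ (σ.symm k), w (σ.symm k)) = _
      rw [Equiv.apply_symm_apply]
    · simp
    · intro b hb hpb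
      rw [List.mem_ofFn] at hb
      obtain ⟨j, rfl⟩ := hb
      have hσj : σ j = k := by simpa using hpb
      have hj : j = σ.symm k := by
        apply σ.injective
        rw [hσj, Equiv.apply_symm_apply]
      subst hj
      show (σ (σ.symm k), w (σ.symm k)) = _
      rw [Equiv.apply_symm_apply]
  rw [hfil]
  show π K g (prodι K g [w (σ.symm k)]) = _
  rw [prodι_singleton, π_ι]

/-- killing of non-bijective terms -/
lemma πT_Lprod_nonbij {f : Fin n → Fin n} (hf : ¬ Function.Surjective f) (w : Fin n → g) :
    πT K g n (Lprod (List.ofFn (fun j => (f j, w j)))) = 0 := by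
  rw [Lprod_eq_tprod, πT, PiTensorProduct.map_tprod]
  simp only [Function.Surjective, not_forall] at hf
  obtain ⟨k, hk⟩ := hf
  push_neg at hk
  apply MultilinearMap.map_coord_zero _ k
  have hfil : (List.ofFn (fun j => (f j, w j))).filter (fun p => p.1 = k) = [] := by
    rw [List.filter_eq_nil_iff]
    intro b hb
    rw [List.mem_ofFn] at hb
    obtain ⟨j, rfl⟩ := hb
    simpa using (hk j)  -- hk : ∀ a, f a ≠ k
  rw [hfil]
  show π K g (prodι K g []) = 0
  rw [prodι_nil, π_one]

/-- the key computation : Ψ on a length-n monomial -/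
lemma Ψ_P (w : Fin n → g) :
    Ψ K g n (P K g w) = ∑ σ : Equiv.Perm (Fin n),
      tprod K (fun k => UniversalEnvelopingAlgebra.ι K (w (σ k))) := by
  show πT K g n (Δ K g n (P K g w)) = _
  rw [Δ_P, map_sum]
  rw [← Finset.sum_filter_of_ne
    (p := fun f : Fin n → Fin n => Function.Bijective f)
    (fun f _ hf => by
      by_contra hbij
      apply hf
      apply πT_Lprod_nonbij _ w
      intro hsurj
      exact hbij ⟨Finite.injective_iff_surjective.2 hsurj, hsurj⟩)]
  rw [← Finset.sum_bij (i := fun (σ : Equiv.Perm (Fin n)) _ => (σ : Fin n → Fin n))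
    (s := Finset.univ)
    (hi := fun σ _ => Finset.mem_filter.2 ⟨Finset.mem_univ _, σ.bijective⟩)
    (i_inj := fun σ _ τ _ h => Equiv.coe_fn_injective h)
    (i_surj := fun f hf => ⟨Equiv.ofBijective f (Finset.mem_filter.1 hf).2, Finset.mem_univ _, rfl⟩)
    (h := fun σ _ => (πT_Lprod_perm σ w).symm)]
  rw [← Equiv.sum_comp (Equiv.inv (Equiv.Perm (Fin n)))
    (fun σ : Equiv.Perm (Fin n) => tprod K (fun k => UniversalEnvelopingAlgebra.ι K (w (σ k))))]
  apply Finset.sum_congr rfl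
  intro σ _
  rfl

end Coproduct4
end SymAux

namespace SymAux

open PiTensorProduct
open scoped TensorProduct
set_option linter.unusedSectionVars false
section SymPart

variable {K : Type*} [Field K] [CharZero K] {g : Type*} [LieRing g] [LieAlgebra K g] {n : ℕ}

variable (K g n)

/-- the symmetrization of a monomial -/
noncomputable def Φ₀ (w : Fin n → g) : UniversalEnvelopingAlgebra K g :=
  ((n.factorial : K)⁻¹) • ∑ σ : Equiv.Perm (Fin n), P K g (fun i => w (σ i))

/-- the space of symmetrized monomials -/
noncomputable def V : Submodule K (UniversalEnvelopingAlgebra K g) :=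
  Submodule.span K (Set.range (Φ₀ K g n))

variable {K g n}

lemma factorial_cast_ne_zero : ((n.factorial : K)) ≠ 0 :=
  Nat.cast_ne_zero.2 (Nat.factorial_ne_zero n)

lemma smul_factorial_Φ₀ (w : Fin n → g) :
    (n.factorial : K) • Φ₀ K g n w = ∑ σ : Equiv.Perm (Fin n), P K g (fun i => w (σ i)) := by
  rw [Φ₀, smul_smul, mul_inv_cancel₀ (factorial_cast_ne_zero (n := n)), one_smul]

lemma μΨ_P (w : Fin n → g) :
    μ K g n (Ψ K g n (P K g w)) = ∑ σ : Equiv.Perm (Fin n), P K g (fun i => w (σ i)) := by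
  rw [Ψ_P, map_sum]
  apply Finset.sum_congr rfl
  intro σ _
  rw [μ_tprod]
  rfl

lemma μΨ_Φ₀ (w : Fin n → g) :
    μ K g n (Ψ K g n (Φ₀ K g n w)) = (n.factorial : K) • Φ₀ K g n w := by
  have h1 : ∀ σ : Equiv.Perm (Fin n),
      μ K g n (Ψ K g n (P K g (fun i => w (σ i))))
        = (n.factorial : K) • Φ₀ K g n w := by
    intro σ
    rw [μΨ_P]
    have h2 : ∀ τ : Equiv.Perm (Fin n),
        P K g (fun i => w (σ (τ i))) = P K g (fun i => w ((σ * τ) i)) := by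
      intro τ; rfl
    have h3 : (∑ τ : Equiv.Perm (Fin n), P K g fun i => w ((σ * τ) i))
        = ∑ ρ : Equiv.Perm (Fin n), P K g fun i => w (ρ i) :=
      Equiv.sum_comp (Equiv.mulLeft σ) (fun ρ => P K g fun i => w (ρ i))
    rw [Finset.sum_congr rfl (fun τ _ => h2 τ), h3, ← smul_factorial_Φ₀]
  have hΦ : Φ₀ K g n w
      = (n.factorial : K)⁻¹ • ∑ σ : Equiv.Perm (Fin n), P K g (fun i => w (σ i)) := rfl
  rw [hΦ, map_smul, map_smul, map_sum, map_sum,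
    Finset.sum_congr rfl (fun σ _ => h1 σ), Finset.sum_const, Finset.card_univ,
    Fintype.card_perm, Fintype.card_fin, ← Nat.cast_smul_eq_nsmul K,
    smul_smul, smul_smul, inv_mul_cancel₀ (factorial_cast_ne_zero (K := K) (n := n)), one_mul]
  rw [← hΦ]

lemma μΨ_eq_on_V {u : UniversalEnvelopingAlgebra K g} (hu : u ∈ V K g n) :
    μ K g n (Ψ K g n u) = (n.factorial : K) • u := by
  induction hu using Submodule.span_induction with
  | mem u hu => obtain ⟨w, rfl⟩ := hu; exact μΨ_Φ₀ w
  | zero => simp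
  | add a b _ _ ha hb => rw [map_add, map_add, ha, hb, smul_add]
  | smul c a _ ha => rw [map_smul, map_smul, ha, smul_comm]

/-- PBW-type injectivity: symmetrized elements meet lower filtration trivially -/
lemma V_inter_FF_eq_zero {m : ℕ} (hmn : m < n) {u : UniversalEnvelopingAlgebra K g}
    (hu : u ∈ V K g n) (hu' : u ∈ (FF m : Submodule K _)) : u = 0 := by
  have h1 := μΨ_eq_on_V hu
  rw [Ψ_eq_zero_of_mem_FF hmn hu', map_zero] at h1
  exact (smul_eq_zero.mp h1.symm).resolve_left (factorial_cast_ne_zero (K := K) (n := n))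

lemma Φ₀_mem_FF (w : Fin n → g) : Φ₀ K g n w ∈ (FF n : Submodule K _) := by
  rw [Φ₀]
  apply Submodule.smul_mem
  apply Submodule.sum_mem
  intro σ _
  rw [P_eq_prodι]
  exact prodι_mem_FF (by simp)

lemma V_le_FF : V K g n ≤ (FF n : Submodule K _) := by
  rw [V, Submodule.span_le]
  rintro u ⟨w, rfl⟩
  exact Φ₀_mem_FF w

lemma P_sub_Φ₀_mem {m : ℕ} (hnm : n = m + 1) (w : Fin n → g) :
    P K g w - Φ₀ K g n w ∈ (FF m : Submodule K _) := by
  have key : P K g w - Φ₀ K g n w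
      = (n.factorial : K)⁻¹ • ∑ σ : Equiv.Perm (Fin n),
          (P K g w - P K g (fun i => w (σ i))) := by
    rw [Finset.sum_sub_distrib, smul_sub, Finset.sum_const, Finset.card_univ,
      Fintype.card_perm, Fintype.card_fin]
    rw [← Nat.cast_smul_eq_nsmul K, smul_smul,
      inv_mul_cancel₀ (factorial_cast_ne_zero (n := n)), one_smul, Φ₀]
  rw [key]
  apply Submodule.smul_mem
  apply Submodule.sum_mem
  intro σ _
  rw [P_eq_prodι, P_eq_prodι]
  refine perm_diff_mem ?_ m ?_
  · exact (Equiv.Perm.ofFn_comp_perm σ w).symm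
  · simp [hnm]

/-- List.ofFn and update/set compatibility -/
lemma ofFn_set (w : Fin n → g) (j : Fin n) (c : g) :
    (List.ofFn w).set (j : ℕ) c = List.ofFn (Function.update w j c) := by
  apply List.ext_getElem
  · simp
  · intro i h1 h2
    rw [List.getElem_set]
    simp only [List.getElem_ofFn]
    by_cases h : (j : ℕ) = i
    · rw [if_pos h]
      rw [Function.update_apply]
      rw [if_pos (by ext; simp [h])]
    · rw [if_neg h, Function.update_apply, if_neg (by
        intro hc
        exact h (by rw [← hc]))]

/-- the derivation formula on `P` -/
lemma lie_P (x : g) (w : Fin n → g) :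
    UniversalEnvelopingAlgebra.ι K x * P K g w - P K g w * UniversalEnvelopingAlgebra.ι K x
      = ∑ j : Fin n, P K g (Function.update w j ⁅x, w j⁆) := by
  rw [P_eq_prodι, lie_prodι]
  have hlen : (List.ofFn w).length = n := List.length_ofFn
  rw [← Equiv.sum_comp (finCongr hlen)
    (fun j : Fin n => P K g (Function.update w j ⁅x, w j⁆))]
  apply Finset.sum_congr rfl
  intro j _
  have hget : (List.ofFn w).get j = w (finCongr hlen j) := by
    rw [List.get_ofFn]
    rfl
  rw [hget, P_eq_prodι, ← ofFn_set]
  congr 1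

lemma lie_mem_V (x : g) {u : UniversalEnvelopingAlgebra K g} (hu : u ∈ V K g n) :
    UniversalEnvelopingAlgebra.ι K x * u - u * UniversalEnvelopingAlgebra.ι K x ∈ V K g n := by
  induction hu using Submodule.span_induction with
  | mem u hu =>
    obtain ⟨w, rfl⟩ := hu
    have key : UniversalEnvelopingAlgebra.ι K x * Φ₀ K g n w
          - Φ₀ K g n w * UniversalEnvelopingAlgebra.ι K x
        = (n.factorial : K)⁻¹ • ∑ i : Fin n,
            (n.factorial : K) • Φ₀ K g n (Function.update w i ⁅x, w i⁆) := by
      rw [Φ₀, smul_mul_assoc, mul_smul_comm, ← smul_sub, Finset.sum_mul, Finset.mul_sum,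
        ← Finset.sum_sub_distrib]
      congr 1
      rw [Finset.sum_congr rfl (fun σ _ => lie_P x (fun i => w (σ i)))]
      have hinner : ∀ σ : Equiv.Perm (Fin n),
          ∑ j : Fin n, P K g (Function.update (fun i => w (σ i)) j ⁅x, w (σ j)⁆)
            = ∑ i : Fin n, P K g (fun k => (Function.update w i ⁅x, w i⁆) (σ k)) := by
        intro σ
        rw [← Equiv.sum_comp σ
          (fun i : Fin n => P K g (fun k => (Function.update w i ⁅x, w i⁆) (σ k)))]
        apply Finset.sum_congr rfl
        intro j _
        congr 1
        funext k
        show Function.update (w ∘ σ) j ⁅x, w (σ j)⁆ k = (Function.update w (σ j) ⁅x, w (σ j)⁆ ∘ σ) k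
        rw [Function.update_comp_equiv w σ (σ j) ⁅x, w (σ j)⁆, Equiv.symm_apply_apply]
      rw [Finset.sum_congr rfl (fun σ _ => hinner σ), Finset.sum_comm]
      apply Finset.sum_congr rfl
      intro i _
      rw [smul_factorial_Φ₀]
    rw [key]
    apply Submodule.smul_mem
    apply Submodule.sum_mem
    intro i _
    apply Submodule.smul_mem
    exact Submodule.subset_span ⟨_, rfl⟩
  | zero => simpa using zero_mem (V K g n)
  | add a b _ _ ha hb =>
    have h : UniversalEnvelopingAlgebra.ι K x * (a + b) - (a + b) * UniversalEnvelopingAlgebra.ι K x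
        = (UniversalEnvelopingAlgebra.ι K x * a - a * UniversalEnvelopingAlgebra.ι K x)
          + (UniversalEnvelopingAlgebra.ι K x * b - b * UniversalEnvelopingAlgebra.ι K x) := by
      noncomm_ring
    rw [h]; exact add_mem ha hb
  | smul c a _ ha =>
    have h : UniversalEnvelopingAlgebra.ι K x * (c • a) - (c • a) * UniversalEnvelopingAlgebra.ι K x
        = c • (UniversalEnvelopingAlgebra.ι K x * a - a * UniversalEnvelopingAlgebra.ι K x) := by
      rw [mul_smul_comm, smul_mul_assoc, smul_sub]
    rw [h]; exact Submodule.smul_mem _ _ ha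

lemma FF_mono {a b : ℕ} (h : a ≤ b) :
    (FF a : Submodule K (UniversalEnvelopingAlgebra K g)) ≤ FF b := by
  apply iSup₂_le
  intro k hk
  have : k ∈ Finset.range (b + 1) := by
    rw [Finset.mem_range] at hk ⊢; omega
  exact le_iSup₂_of_le k this le_rfl

lemma FF_le_sup_V {m : ℕ} (hnm : n = m + 1) :
    (FF n : Submodule K (UniversalEnvelopingAlgebra K g)) ≤ FF m ⊔ V K g n := by
  intro u hu
  refine FF_induction (K := K) (g := g) (m := n)
    (p := fun u => u ∈ (FF m ⊔ V K g n : Submodule K _)) ?_ ?_ ?_ ?_ u hu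
  · exact zero_mem _
  · intro l hl
    rcases Nat.lt_or_ge l.length n with hlt | hge
    · exact Submodule.mem_sup_left (prodι_mem_FF (by omega))
    · have hlen : l.length = n := le_antisymm hl hge
      have hw : l = List.ofFn (fun i : Fin n => l.get (Fin.cast hlen.symm i)) := by
        apply List.ext_getElem
        · simp [hlen]
        · intro i h1 h2
          simp [List.getElem_ofFn]
      have hP : prodι K g l = P K g (fun i : Fin n => l.get (Fin.cast hlen.symm i)) := by
        rw [P_eq_prodι]
        exact congrArg (prodι K g) hw
      rw [hP]
      set w := fun i : Fin n => l.get (Fin.cast hlen.symm i)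
      have : P K g w = (P K g w - Φ₀ K g n w) + Φ₀ K g n w := (sub_add_cancel _ _).symm
      rw [this]
      exact add_mem (Submodule.mem_sup_left (P_sub_Φ₀_mem hnm w))
        (Submodule.mem_sup_right (Submodule.subset_span ⟨w, rfl⟩))
  · intro a b ha hb; exact add_mem ha hb
  · intro c a ha; exact Submodule.smul_mem _ _ ha

lemma P_zero_eq_one (w : Fin 0 → g) : P K g w = 1 := by
  rw [P]; simp

lemma Φ₀_zero_eq_one (w : Fin 0 → g) : Φ₀ K g 0 w = 1 := by
  rw [Φ₀]
  have h1 : ∀ σ : Equiv.Perm (Fin 0), P K g (fun i => w (σ i)) = 1 := by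
    intro σ; exact P_zero_eq_one _
  rw [Finset.sum_congr rfl (fun σ _ => h1 σ), Finset.sum_const, Finset.card_univ,
    Fintype.card_perm, Fintype.card_fin]
  simp

/-- V spans everything in degree 0 -/
lemma FF_zero_le_V :
    (FF 0 : Submodule K (UniversalEnvelopingAlgebra K g)) ≤ V K g 0 := by
  intro u hu
  refine FF_induction (K := K) (g := g) (m := 0)
    (p := fun u => u ∈ V K g 0) ?_ ?_ ?_ ?_ u hu
  · exact zero_mem _
  · intro l hl
    have hl0 : l = [] := List.length_eq_zero_iff.1 (Nat.le_zero.1 hl)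
    subst hl0
    rw [show prodι K g [] = 1 from rfl, ← Φ₀_zero_eq_one (fun i : Fin 0 => i.elim0)]
    exact Submodule.subset_span ⟨_, rfl⟩
  · intro a b ha hb; exact add_mem ha hb
  · intro c a ha; exact Submodule.smul_mem _ _ ha

lemma P_eq_Φ₀_of_zero (hn : n = 0) (w : Fin n → g) : P K g w = Φ₀ K g n w := by
  subst hn
  rw [P_zero_eq_one, Φ₀_zero_eq_one]

end SymPart
end SymAux

open SymAux




/-- for a Lie algebra `g` over a field of characteristic zero and
`n : ℕ`, the symmetrization map `sym : S_n(g) → U(g)`, defined on the `n`-th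
graded piece `S_n(g) = F n / F (n-1)` of the filtration of `U(g)` by
`sym (x₁ ⋯ xₙ) = (1/n!) ∑_{σ ∈ Sₙ} x_{σ 1} ⋯ x_{σ n}`, exists, is injective
(hence an isomorphism onto its image), and is `g`-equivariant for the
derivation extension of the adjoint action (which on `U(g)` is
`u ↦ ι x * u - u * ι x`). -/
theorem symmetrization_gModule_iso
    (K : Type*) [Field K] [CharZero K]
    (g : Type*) [LieRing g] [LieAlgebra K g] (n : ℕ)
    (G : Submodule K (UniversalEnvelopingAlgebra K g))
    (hG : G = Submodule.span K (Set.range (UniversalEnvelopingAlgebra.ι K : g →ₗ⁅K⁆ _)))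
    (F : ℕ → Submodule K (UniversalEnvelopingAlgebra K g))
    (hF : ∀ m, F m = ⨆ k ∈ Finset.range (m + 1), G ^ k)
    -- the previous filtration step, with `F (-1) = 0`
    (Fprev : Submodule K (UniversalEnvelopingAlgebra K g))
    (hFprev : Fprev = Nat.rec ⊥ (fun m _ => F m) n)
    -- the adjoint action preserves each filtration step
    (hstab : ∀ (x : g), ∀ u ∈ F n,
      UniversalEnvelopingAlgebra.ι K x * u - u * UniversalEnvelopingAlgebra.ι K x ∈ F n) :
    ∃ sym : (↥(F n) ⧸ (Fprev.comap (F n).subtype)) →ₗ[K] UniversalEnvelopingAlgebra K g,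
      Function.Injective sym ∧
      -- the defining formula on classes of monomials `x₁ ⋯ xₙ`
      (∀ (v : Fin n → g)
        (hv : (List.ofFn fun i => UniversalEnvelopingAlgebra.ι K (v i)).prod ∈ F n),
        sym (Submodule.Quotient.mk ⟨_, hv⟩) =
          ((n.factorial : K)⁻¹) •
            ∑ σ : Equiv.Perm (Fin n),
              (List.ofFn fun i => UniversalEnvelopingAlgebra.ι K (v (σ i))).prod) ∧
      -- `g`-equivariance
      (∀ (x : g) (u : UniversalEnvelopingAlgebra K g) (hu : u ∈ F n)
        (hu' : UniversalEnvelopingAlgebra.ι K x * u - u * UniversalEnvelopingAlgebra.ι K x ∈ F n),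
        sym (Submodule.Quotient.mk ⟨_, hu'⟩) =
          UniversalEnvelopingAlgebra.ι K x * sym (Submodule.Quotient.mk ⟨u, hu⟩)
            - sym (Submodule.Quotient.mk ⟨u, hu⟩) * UniversalEnvelopingAlgebra.ι K x) := by
  classical
  have hFF : ∀ m, F m = (FF m : Submodule K (UniversalEnvelopingAlgebra K g)) := by
    intro m
    rw [hF m, hG]
    rfl
  -- abstract facts about Fprev
  have hprev_zero : ∀ u ∈ V K g n, u ∈ Fprev → u = 0 := by
    rcases n with _ | m
    · intro u _ h0
      have hb0 : Fprev = (⊥ : Submodule K (UniversalEnvelopingAlgebra K g)) := hFprev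
      rw [hb0] at h0
      simpa using h0
    · intro u hu h0
      have hFm : Fprev = (FF m : Submodule K (UniversalEnvelopingAlgebra K g)) :=
        hFprev.trans (hFF m)
      exact V_inter_FF_eq_zero (Nat.lt_succ_self m) hu (hFm ▸ h0)
  have hsup : (FF n : Submodule K (UniversalEnvelopingAlgebra K g)) ≤ Fprev ⊔ V K g n := by
    rcases n with _ | m
    · exact le_trans FF_zero_le_V le_sup_right
    · have hFm : Fprev = (FF m : Submodule K (UniversalEnvelopingAlgebra K g)) :=
        hFprev.trans (hFF m)
      rw [hFm]
      exact FF_le_sup_V rfl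
  have hprev_lie : ∀ (x : g), ∀ u ∈ Fprev,
      UniversalEnvelopingAlgebra.ι K x * u - u * UniversalEnvelopingAlgebra.ι K x ∈ Fprev := by
    rcases n with _ | m
    · intro x u h0
      have hb0 : Fprev = (⊥ : Submodule K (UniversalEnvelopingAlgebra K g)) := hFprev
      rw [hb0] at h0
      rw [Submodule.mem_bot] at h0
      subst h0
      have : UniversalEnvelopingAlgebra.ι K x * 0 - 0 * UniversalEnvelopingAlgebra.ι K x = 0 := by
        simp
      rw [this]
      exact zero_mem _
    · intro x u h0
      have hFm : Fprev = (FF m : Submodule K (UniversalEnvelopingAlgebra K g)) :=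
        hFprev.trans (hFF m)
      rw [hFm] at h0 ⊢
      exact lie_mem_FF x h0
  have hdiff : ∀ w : Fin n → g, P K g w - Φ₀ K g n w ∈ Fprev := by
    rcases n with _ | m
    · intro w
      rw [P_eq_Φ₀_of_zero rfl w, sub_self]
      exact zero_mem _
    · intro w
      have hFm : Fprev = (FF m : Submodule K (UniversalEnvelopingAlgebra K g)) :=
        hFprev.trans (hFF m)
      rw [hFm]
      exact P_sub_Φ₀_mem rfl w
  -- the maps
  let e : V K g n →ₗ[K] (UniversalEnvelopingAlgebra K g ⧸ Fprev) :=
    Fprev.mkQ.comp (V K g n).subtype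
  have einj : Function.Injective e := by
    rw [← LinearMap.ker_eq_bot, LinearMap.ker_eq_bot']
    intro z hz
    have h0 : z.val ∈ Fprev := by
      have := hz
      rwa [LinearMap.comp_apply, Submodule.mkQ_apply, Submodule.Quotient.mk_eq_zero] at this
    exact Subtype.ext (hprev_zero z.val z.2 h0)
  let hmap : (↥(F n) ⧸ (Fprev.comap (F n).subtype)) →ₗ[K] (UniversalEnvelopingAlgebra K g ⧸ Fprev) :=
    (Fprev.comap (F n).subtype).liftQ (Fprev.mkQ.comp (F n).subtype)
      (fun z hz => by
        rw [LinearMap.mem_ker, LinearMap.comp_apply, Submodule.mkQ_apply,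
          Submodule.Quotient.mk_eq_zero]
        exact hz)
  have hmap_mk : ∀ (u : UniversalEnvelopingAlgebra K g) (hu : u ∈ F n),
      hmap (Submodule.Quotient.mk ⟨u, hu⟩) = Fprev.mkQ u := by
    intro u hu
    rw [show hmap (Submodule.Quotient.mk ⟨u, hu⟩)
      = (Fprev.mkQ.comp (F n).subtype) ⟨u, hu⟩ from Submodule.liftQ_apply _ _ _]
    rfl
  have hmapinj : Function.Injective hmap := by
    rw [← LinearMap.ker_eq_bot]
    apply Submodule.ker_liftQ_eq_bot
    intro z hz
    rw [LinearMap.mem_ker, LinearMap.comp_apply, Submodule.mkQ_apply,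
      Submodule.Quotient.mk_eq_zero] at hz
    exact hz
  have hrange : ∀ z, hmap z ∈ LinearMap.range e := by
    intro z
    obtain ⟨z', rfl⟩ := Submodule.Quotient.mk_surjective _ z
    obtain ⟨u, hu⟩ := z'
    obtain ⟨a, haF, b, hbV, hab⟩ := Submodule.mem_sup.1 (hsup ((hFF n) ▸ hu))
    refine ⟨⟨b, hbV⟩, ?_⟩
    rw [hmap_mk]
    show Fprev.mkQ b = Fprev.mkQ u
    rw [Submodule.mkQ_apply, Submodule.mkQ_apply]
    apply (Submodule.Quotient.eq _).2
    have : b - u = -a := by rw [← hab]; abel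
    rw [this]
    exact neg_mem haF
  let e' := LinearEquiv.ofInjective e einj
  let symmap : (↥(F n) ⧸ (Fprev.comap (F n).subtype)) →ₗ[K] UniversalEnvelopingAlgebra K g :=
    (V K g n).subtype ∘ₗ e'.symm.toLinearMap ∘ₗ (LinearMap.codRestrict (LinearMap.range e) hmap hrange)
  have symval : ∀ (u : UniversalEnvelopingAlgebra K g) (hu : u ∈ F n) (s : _)
      (hs : s ∈ V K g n), u - s ∈ Fprev →
      symmap (Submodule.Quotient.mk ⟨u, hu⟩) = s := by
    intro u hu s hs hd
    show (V K g n).subtype (e'.symm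
      (LinearMap.codRestrict (LinearMap.range e) hmap hrange (Submodule.Quotient.mk ⟨u, hu⟩))) = s
    have h1 : (LinearMap.codRestrict (LinearMap.range e) hmap hrange
        (Submodule.Quotient.mk ⟨u, hu⟩)) = e' ⟨s, hs⟩ := by
      apply Subtype.ext
      rw [LinearEquiv.ofInjective_apply]
      show hmap (Submodule.Quotient.mk ⟨u, hu⟩) = e ⟨s, hs⟩
      rw [hmap_mk]
      show Fprev.mkQ u = Fprev.mkQ s
      rw [Submodule.mkQ_apply, Submodule.mkQ_apply]
      exact (Submodule.Quotient.eq _).2 hd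
    rw [h1, LinearEquiv.symm_apply_apply]
    rfl
  have syminj : Function.Injective symmap := by
    intro z₁ z₂ h12
    apply hmapinj
    have h3 := Submodule.injective_subtype (V K g n) h12
    have h4 := e'.symm.injective h3
    exact congrArg Subtype.val h4
  refine ⟨symmap, syminj, ?_, ?_⟩
  · intro v hv
    exact symval _ hv (Φ₀ K g n v) (Submodule.subset_span ⟨v, rfl⟩) (hdiff v)
  · intro x u hu hu'
    obtain ⟨a, haF, b, hbV, hab⟩ := Submodule.mem_sup.1 (hsup ((hFF n) ▸ hu))
    have hub : u - b = a := by rw [← hab]; abel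
    have hb1 : symmap (Submodule.Quotient.mk ⟨u, hu⟩) = b :=
      symval u hu b hbV (by rw [hub]; exact haF)
    have hlieb : UniversalEnvelopingAlgebra.ι K x * b - b * UniversalEnvelopingAlgebra.ι K x
        ∈ V K g n := lie_mem_V x hbV
    have hdiff2 : (UniversalEnvelopingAlgebra.ι K x * u - u * UniversalEnvelopingAlgebra.ι K x)
        - (UniversalEnvelopingAlgebra.ι K x * b - b * UniversalEnvelopingAlgebra.ι K x)
        ∈ Fprev := by
      have heq : (UniversalEnvelopingAlgebra.ι K x * u - u * UniversalEnvelopingAlgebra.ι K x)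
          - (UniversalEnvelopingAlgebra.ι K x * b - b * UniversalEnvelopingAlgebra.ι K x)
          = UniversalEnvelopingAlgebra.ι K x * (u - b) - (u - b) * UniversalEnvelopingAlgebra.ι K x := by
        noncomm_ring
      rw [heq, hub]
      exact hprev_lie x a haF
    have hfinal := symval _ hu' _ hlieb hdiff2
    rw [hfinal, hb1]
end

section
/- Let v be a semisimple Lie algebra over a field of characteristic zero, g = v ⊕ v with involution θ(x,y)=(y,x), h = {(x,x)}, p = {(x,-x)}. Every h-invariant polynomial function on p × p that is homogeneous of bidegree (k,ℓ) is the restriction to p × p of a g-invariant polynomial function on g × g homogeneous of bidegree (k,ℓ). (Restriction property for diagonal symmetric Lie algebras.) -/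
variable {K : Type*} [Field K] {v : Type*} [LieRing v] [LieAlgebra K v]

/-- The product Lie ring structure on `v × v` (componentwise bracket). -/
instance prodLieRing : LieRing (v × v) where
  bracket x y := (⁅x.1, y.1⁆, ⁅x.2, y.2⁆)
  add_lie x y z := Prod.ext (add_lie x.1 y.1 z.1) (add_lie x.2 y.2 z.2)
  lie_add x y z := Prod.ext (lie_add x.1 y.1 z.1) (lie_add x.2 y.2 z.2)
  lie_self x := Prod.ext (lie_self x.1) (lie_self x.2)
  leibniz_lie x y z := Prod.ext (leibniz_lie x.1 y.1 z.1) (leibniz_lie x.2 y.2 z.2)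

/-- The product Lie algebra structure on `v × v`. -/
instance prodLieAlgebra : LieAlgebra K (v × v) where
  lie_smul t x y := Prod.ext (lie_smul t x.1 y.1) (lie_smul t x.2 y.2)

/-- restriction property for diagonal symmetric Lie algebras:
for `v` semisimple, `g = v ⊕ v`, `h = {(x,x)}`, `p = {(x,-x)}`, every
`h`-invariant `(k,ℓ)`-homogeneous polynomial function on `p × p` — encoded in
characteristic zero by its polarization, a multilinear form symmetric in its
first `k` and last `ℓ` arguments — is the restriction to `p × p` of a
`g`-invariant `(k,ℓ)`-homogeneous polynomial function on `g × g`. -/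
theorem diagonal_restriction_property
    [FiniteDimensional K v] [LieAlgebra.IsSemisimple K v]
    (h p : Submodule K (v × v))
    (hH : h = LinearMap.range ((LinearMap.id : v →ₗ[K] v).prod LinearMap.id))
    (hP : p = LinearMap.range ((LinearMap.id : v →ₗ[K] v).prod (-LinearMap.id)))
    (k ℓ : ℕ)
    (F : MultilinearMap K (fun _ : Fin k => ↥p) (MultilinearMap K (fun _ : Fin ℓ => ↥p) K))
    -- `F` is symmetric in each of the two blocks of arguments
    (hFsym₁ : ∀ (σ : Equiv.Perm (Fin k)) (xs : Fin k → ↥p) (ys : Fin ℓ → ↥p),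
      F (xs ∘ σ) ys = F xs ys)
    (hFsym₂ : ∀ (xs : Fin k → ↥p) (τ : Equiv.Perm (Fin ℓ)) (ys : Fin ℓ → ↥p),
      F xs (ys ∘ τ) = F xs ys)
    -- `F` is (infinitesimally) `h`-invariant
    (hFinv : ∀ z ∈ h, ∀ (xs : Fin k → ↥p) (ys : Fin ℓ → ↥p)
        (Bv : Fin k → ↥p) (Cv : Fin ℓ → ↥p),
      (∀ i, (Bv i : v × v) = ⁅z, (xs i : v × v)⁆) →
      (∀ j, (Cv j : v × v) = ⁅z, (ys j : v × v)⁆) →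
      (∑ i, F (Function.update xs i (Bv i)) ys)
        + (∑ j, F xs (Function.update ys j (Cv j))) = 0) :
    ∃ G : MultilinearMap K (fun _ : Fin k => v × v)
        (MultilinearMap K (fun _ : Fin ℓ => v × v) K),
      (∀ (σ : Equiv.Perm (Fin k)) (xs : Fin k → v × v) (ys : Fin ℓ → v × v),
        G (xs ∘ σ) ys = G xs ys) ∧
      (∀ (xs : Fin k → v × v) (τ : Equiv.Perm (Fin ℓ)) (ys : Fin ℓ → v × v),
        G xs (ys ∘ τ) = G xs ys) ∧
      -- `G` is (infinitesimally) `g`-invariant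
      (∀ (z : v × v) (xs : Fin k → v × v) (ys : Fin ℓ → v × v),
        (∑ i, G (Function.update xs i ⁅z, xs i⁆) ys)
          + (∑ j, G xs (Function.update ys j ⁅z, ys j⁆)) = 0) ∧
      -- `G` restricts to `F` on `p × p`
      (∀ (xs : Fin k → ↥p) (ys : Fin ℓ → ↥p),
        G (fun i => (xs i : v × v)) (fun j => (ys j : v × v)) = F xs ys) := by
  -- the projection `g → p`, `(a, b) ↦ (a, -a)`
  have hmemP : ∀ a : v, ((a, -a) : v × v) ∈ p := by
    intro a
    rw [hP]
    exact ⟨a, rfl⟩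
  set M : (v × v) →ₗ[K] (v × v) :=
    (LinearMap.fst K v v).prod (-(LinearMap.fst K v v)) with hM
  set L : (v × v) →ₗ[K] ↥p := LinearMap.codRestrict p M (fun x => hmemP x.1) with hL
  -- `L` fixes `p` pointwise
  have hLfix : ∀ x : ↥p, L (x : v × v) = x := by
    intro x
    have hx : (x : v × v) ∈ LinearMap.range ((LinearMap.id : v →ₗ[K] v).prod (-LinearMap.id)) := hP ▸ x.2
    obtain ⟨u, hu⟩ := hx
    apply Subtype.ext
    have h1 : (x : v × v) = (u, -u) := hu.symm
    show M (x : v × v) = (x : v × v)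
    rw [h1]
    rfl
  -- `L` intertwines the `g`-action and the `h`-action through the diagonal
  have hLbr : ∀ (z x : v × v), (L ⁅z, x⁆ : v × v) = ⁅((z.1, z.1) : v × v), (L x : v × v)⁆ := by
    intro z x
    show ((⁅z.1, x.1⁆ : v), -(⁅z.1, x.1⁆ : v)) = (⁅z.1, x.1⁆, ⁅z.1, -x.1⁆)
    rw [lie_neg]
  refine ⟨(MultilinearMap.compLinearMapₗ (fun _ : Fin ℓ => L)).compMultilinearMap
      (F.compLinearMap (fun _ : Fin k => L)), ?_, ?_, ?_, ?_⟩
  · intro σ xs ys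
    exact hFsym₁ σ (fun i => L (xs i)) (fun j => L (ys j))
  · intro xs τ ys
    exact hFsym₂ (fun i => L (xs i)) τ (fun j => L (ys j))
  · intro z xs ys
    have hzh : ((z.1, z.1) : v × v) ∈ h := by
      rw [hH]; exact ⟨z.1, rfl⟩
    have key := hFinv ((z.1, z.1) : v × v) hzh (fun i => L (xs i)) (fun j => L (ys j))
      (fun i => L ⁅z, xs i⁆) (fun j => L ⁅z, ys j⁆)
      (fun i => hLbr z (xs i)) (fun j => hLbr z (ys j))
    have e1 : ∀ i, (fun i' => L (Function.update xs i ⁅z, xs i⁆ i'))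
        = Function.update (fun i' => L (xs i')) i (L ⁅z, xs i⁆) := by
      intro i
      funext j
      exact Function.apply_update (fun _ x => L x) xs i ⁅z, xs i⁆ j
    have e2 : ∀ j, (fun j' => L (Function.update ys j ⁅z, ys j⁆ j'))
        = Function.update (fun j' => L (ys j')) j (L ⁅z, ys j⁆) := by
      intro j
      funext i
      exact Function.apply_update (fun _ x => L x) ys j ⁅z, ys j⁆ i
    calc (∑ i, F (fun i' => L (Function.update xs i ⁅z, xs i⁆ i')) (fun j => L (ys j)))
          + (∑ j, F (fun i => L (xs i)) (fun j' => L (Function.update ys j ⁅z, ys j⁆ j')))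
        = (∑ i, F (Function.update (fun i' => L (xs i')) i (L ⁅z, xs i⁆)) (fun j => L (ys j)))
          + (∑ j, F (fun i => L (xs i))
              (Function.update (fun j' => L (ys j')) j (L ⁅z, ys j⁆))) := by
          congr 1
          · exact Finset.sum_congr rfl fun i _ => by rw [e1 i]
          · exact Finset.sum_congr rfl fun j _ => by rw [e2 j]
      _ = 0 := key
  · intro xs ys
    have e1 : (fun i => L ((xs i : v × v))) = xs := funext fun i => hLfix (xs i)
    have e2 : (fun j => L ((ys j : v × v))) = ys := funext fun j => hLfix (ys j)
    show F (fun i => L ((xs i : v × v))) (fun j => L ((ys j : v × v))) = F xs ys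
    rw [e1, e2]
end
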